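/- arXiv:2204.07858 — 2 statements merged into one kernel-verified Lean document; each statement's English description precedes it below -/
import Mathlib

section
/- Let n ≥ 3 be an integer and q ∈ ℂ. For every z ∈ ℂ^n with z_i ≠ 0 for all i and z_1⋯z_n ≠ 1, setting x_1 = z_1⋯z_n − 1, y_1 = z_2, and y_i = z_i z_{i+1} for 2 ≤ i ≤ n−1, one has the identity q(x_1+1)^2/(x_1 · y_1⋯y_{n−1}) + y_1 + ⋯ + y_{n−1} = q z_1^2 z_n/(z_1⋯z_n − 1) + z_2 + Σ_{i=2}^{n−1} z_i z_{i+1}. (In particular x_1 ≠ 0 and all y_i ≠ 0, so both sides are defined.) -/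
open Finset

private lemma givental_prod_aux (z : ℕ → ℂ) :
    ∀ n, 3 ≤ n →
      (∏ i ∈ Finset.Icc 1 n, z i) ^ 2
        = z 1 ^ 2 * z n * ∏ i ∈ Finset.Icc 1 (n - 1),
            (if i = 1 then z 2 else z i * z (i + 1)) := by
  intro n hn3
  induction n, hn3 using Nat.le_induction with
  | base =>
      have h1 : Finset.Icc 1 3 = {1, 2, 3} := by decide
      have h2 : Finset.Icc 1 2 = {1, 2} := by decide
      simp [h1, h2]
      ring
  | succ n hn ih =>
      have hn1 : 1 ≤ n := by omega
      have hP : (∏ i ∈ Finset.Icc 1 (n + 1), z i)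
          = (∏ i ∈ Finset.Icc 1 n, z i) * z (n + 1) :=
        Finset.prod_Icc_succ_top (by omega) z
      have hn' : n + 1 - 1 = (n - 1) + 1 := by omega
      have hY : (∏ i ∈ Finset.Icc 1 (n + 1 - 1),
            (if i = 1 then z 2 else z i * z (i + 1)))
          = (∏ i ∈ Finset.Icc 1 (n - 1),
              (if i = 1 then z 2 else z i * z (i + 1)))
            * (if n = 1 then z 2 else z n * z (n + 1)) := by
        rw [hn', Finset.prod_Icc_succ_top (a := 1) (b := n - 1) (by omega),
          show n - 1 + 1 = n from by omega]
      have hne : ¬ n = 1 := by omega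
      rw [hP, hY, if_neg hne, mul_pow, ih]
      ring

/-- **Coordinate-change identity for Givental's mirror LG potential of the quadric.**
For `n ≥ 3`, `q ∈ ℂ`, and `z ∈ ℂⁿ` (indexed `z 1, …, z n`) with all `z i ≠ 0` and
`z 1 ⋯ z n ≠ 1`, setting `x₁ = z 1 ⋯ z n − 1`, `y 1 = z 2`, and `y i = z i * z (i+1)` for
`2 ≤ i ≤ n − 1`, one has `x₁ ≠ 0`, all `y i ≠ 0`, and
`q (x₁+1)² / (x₁ ⬝ y 1 ⋯ y (n−1)) + y 1 + ⋯ + y (n−1)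
  = q z₁² z_n / (z 1 ⋯ z n − 1) + z 2 + ∑_{i=2}^{n−1} z i z (i+1)`. -/
theorem givental_mirror_coordinate_change (n : ℕ) (hn : 3 ≤ n) (q : ℂ) (z : ℕ → ℂ)
    (hz : ∀ i ∈ Finset.Icc 1 n, z i ≠ 0)
    (hprod : (∏ i ∈ Finset.Icc 1 n, z i) ≠ 1) :
    let x₁ : ℂ := (∏ i ∈ Finset.Icc 1 n, z i) - 1
    let y : ℕ → ℂ := fun i => if i = 1 then z 2 else z i * z (i + 1)
    x₁ ≠ 0 ∧ (∀ i ∈ Finset.Icc 1 (n - 1), y i ≠ 0) ∧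
      q * (x₁ + 1) ^ 2 / (x₁ * ∏ i ∈ Finset.Icc 1 (n - 1), y i)
          + ∑ i ∈ Finset.Icc 1 (n - 1), y i
        = q * (z 1) ^ 2 * z n / ((∏ i ∈ Finset.Icc 1 n, z i) - 1)
          + z 2 + ∑ i ∈ Finset.Icc 2 (n - 1), z i * z (i + 1) := by
  intro x₁ y
  have hx1 : x₁ ≠ 0 := sub_ne_zero.mpr hprod
  have hy : ∀ i ∈ Finset.Icc 1 (n - 1), y i ≠ 0 := by
    intro i hi
    simp only [Finset.mem_Icc] at hi
    by_cases h1 : i = 1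
    · simp only [y, h1, if_pos rfl]
      exact hz 2 (by simp [Finset.mem_Icc]; omega)
    · simp only [y, if_neg h1]
      exact mul_ne_zero (hz i (by simp [Finset.mem_Icc]; omega))
        (hz (i + 1) (by simp [Finset.mem_Icc]; omega))
  have hPi : (∏ i ∈ Finset.Icc 1 (n - 1), y i) ≠ 0 := Finset.prod_ne_zero_iff.mpr hy
  refine ⟨hx1, hy, ?_⟩
  have hx1p : x₁ + 1 = ∏ i ∈ Finset.Icc 1 n, z i := by simp [x₁]
  have hP2 : (x₁ + 1) ^ 2 = z 1 ^ 2 * z n * ∏ i ∈ Finset.Icc 1 (n - 1), y i := by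
    rw [hx1p]; exact givental_prod_aux z n hn
  have hIcc : Finset.Icc 1 (n - 1) = insert 1 (Finset.Icc 2 (n - 1)) := by
    ext i; simp [Finset.mem_Icc]; omega
  have hsum : (∑ i ∈ Finset.Icc 1 (n - 1), y i)
      = z 2 + ∑ i ∈ Finset.Icc 2 (n - 1), z i * z (i + 1) := by
    rw [hIcc, Finset.sum_insert (by simp [Finset.mem_Icc])]
    congr 1
    refine Finset.sum_congr rfl fun i hi => ?_
    simp only [Finset.mem_Icc] at hi
    simp only [y, if_neg (by omega : ¬ i = 1)]
  have hdiv : q * (x₁ + 1) ^ 2 / (x₁ * ∏ i ∈ Finset.Icc 1 (n - 1), y i)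
      = q * z 1 ^ 2 * z n / x₁ := by
    rw [hP2]
    field_simp
  rw [hdiv, hsum]
  have : x₁ = (∏ i ∈ Finset.Icc 1 n, z i) - 1 := rfl
  rw [this]
  ring
end

section
/- Let n ≥ 4 be an even integer and q a nonzero complex number. The set of critical points of W_0 in Z^n is exactly the disjoint union V(I_1) ∪ V(I_2); that is, z ∈ Z^n satisfies ∂W_0/∂z_j(z) = 0 for all 1 ≤ j ≤ n if and only if z ∈ V(I_1) or z ∈ V(I_2), and V(I_1) ∩ V(I_2) = ∅. -/
open Finset

/-- One-based access to the coordinates of a point `z ∈ ℂⁿ`: `zc n z j = z_j` for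
`1 ≤ j ≤ n` (and `0` for out-of-range indices, which are never used). -/
noncomputable def zc (n : ℕ) (z : Fin n → ℂ) (j : ℕ) : ℂ :=
  if h : 1 ≤ j ∧ j ≤ n then z ⟨j - 1, by omega⟩ else 0

/-- The mirror Landau–Ginzburg potential of the quadric `Qⁿ`:
`W₀(z) = q z₁² z_n/(z₁⋯z_n − 1) + z₂ + ∑_{i=2}^{n−1} z_i z_{i+1}`,
defined on `Zⁿ = {z ∈ ℂⁿ : z₁⋯z_n ≠ 1}`. -/
noncomputable def W0 (n : ℕ) (q : ℂ) (z : Fin n → ℂ) : ℂ :=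
  q * (zc n z 1) ^ 2 * zc n z n / ((∏ j, z j) - 1)
    + zc n z 2 + ∑ i ∈ Finset.Icc 2 (n - 1), zc n z i * zc n z (i + 1)

/-- `z` is a critical point of `W₀` in `Zⁿ`: `z₁⋯z_n ≠ 1` and all `n` partial derivatives
`∂W₀/∂z_j` vanish at `z`. -/
def IsCritPt (n : ℕ) (q : ℂ) (z : Fin n → ℂ) : Prop :=
  (∏ j, z j) ≠ 1 ∧
    ∀ j : Fin n, deriv (fun t => W0 n q (Function.update z j t)) (z j) = 0

/-- Membership in `V(I₁)`: `z_{2i+1} = 1` for `1 ≤ i ≤ n/2−1`, `z_{2i} = z_n` for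
`1 ≤ i ≤ n/2`, `q z₁² = 1`, and `z₁ z_n^{n/2} = 2`. -/
def MemV1 (n : ℕ) (q : ℂ) (z : Fin n → ℂ) : Prop :=
  (∀ i : ℕ, 1 ≤ i → i ≤ n / 2 - 1 → zc n z (2 * i + 1) = 1) ∧
    (∀ i : ℕ, 1 ≤ i → i ≤ n / 2 → zc n z (2 * i) = zc n z n) ∧
    q * (zc n z 1) ^ 2 = 1 ∧ zc n z 1 * (zc n z n) ^ (n / 2) = 2

/-- Membership in `V(I₂)`: `z_{2i+1} = (−1)^i` for `1 ≤ i ≤ n/2−1`, `z_{2i} = 0` for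
`1 ≤ i ≤ n/2`, and `q z₁² = (−1)^{(n−2)/2}`. -/
def MemV2 (n : ℕ) (q : ℂ) (z : Fin n → ℂ) : Prop :=
  (∀ i : ℕ, 1 ≤ i → i ≤ n / 2 - 1 → zc n z (2 * i + 1) = (-1 : ℂ) ^ i) ∧
    (∀ i : ℕ, 1 ≤ i → i ≤ n / 2 → zc n z (2 * i) = 0) ∧
    q * (zc n z 1) ^ 2 = (-1 : ℂ) ^ ((n - 2) / 2)

lemma zc_eq (n : ℕ) (z : Fin n → ℂ) (k : ℕ) (h1 : 1 ≤ k) (h2 : k ≤ n) :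
    zc n z k = z ⟨k - 1, by omega⟩ := dif_pos ⟨h1, h2⟩

lemma zc_fin (n : ℕ) (z : Fin n → ℂ) (j : Fin n) : zc n z (j.1 + 1) = z j := by
  rw [zc_eq n z _ (by omega) (by omega)]
  congr 1

lemma zc_update (n : ℕ) (z : Fin n → ℂ) (j : Fin n) (t : ℂ) (i : ℕ) :
    zc n (Function.update z j t) i = if i = j.1 + 1 then t else zc n z i := by
  by_cases h : 1 ≤ i ∧ i ≤ n
  · rw [zc, dif_pos h, Function.update_apply]
    have hiff : ((⟨i - 1, by omega⟩ : Fin n) = j) ↔ i = j.1 + 1 := by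
      rw [Fin.ext_iff]; simp; omega
    by_cases he : i = j.1 + 1
    · rw [if_pos (hiff.2 he), if_pos he]
    · rw [if_neg (fun hh => he (hiff.1 hh)), if_neg he, zc, dif_pos h]
  · have hne : ¬(i = j.1 + 1) := by have := j.2; omega
    rw [zc, dif_neg h, if_neg hne, zc, dif_neg h]

lemma zc_ne_zero (n : ℕ) (z : Fin n → ℂ) (hz : ∀ j, z j ≠ 0) (k : ℕ) (h1 : 1 ≤ k) (h2 : k ≤ n) :
    zc n z k ≠ 0 := by rw [zc_eq n z k h1 h2]; exact hz _

lemma prod_univ_eq (n : ℕ) (z : Fin n → ℂ) :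
    ∏ j, z j = ∏ i ∈ range n, zc n z (i + 1) := by
  rw [← Fin.prod_univ_eq_prod_range (fun i => zc n z (i + 1)) n]
  exact Finset.prod_congr rfl fun j _ => (zc_fin n z j).symm

lemma prod_range_two_mul (m : ℕ) (f : ℕ → ℂ) :
    ∏ i ∈ range (2 * m), f i = ∏ i ∈ range m, (f (2 * i) * f (2 * i + 1)) := by
  induction m with
  | zero => simp
  | succ m ih =>
    rw [show 2 * (m + 1) = 2 * m + 1 + 1 by ring, prod_range_succ, prod_range_succ,
      prod_range_succ, ih, mul_assoc]

lemma prod_eq_V1 (n m : ℕ) (hn : 4 ≤ n) (hm : n = 2 * m) (z : Fin n → ℂ)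
    (hodd : ∀ i, 1 ≤ i → i ≤ m - 1 → zc n z (2 * i + 1) = 1)
    (heven : ∀ i, 1 ≤ i → i ≤ m → zc n z (2 * i) = zc n z n) :
    ∏ j, z j = zc n z 1 * (zc n z n) ^ m := by
  subst hm
  have hm2 : 2 ≤ m := by omega
  rw [prod_univ_eq, prod_range_two_mul]
  have hpair : ∀ i ∈ range m, (fun i => zc (2*m) z (2 * i + 1) * zc (2*m) z (2 * i + 1 + 1)) i
      = if i = 0 then zc (2*m) z 1 * zc (2*m) z (2*m) else zc (2*m) z (2*m) := by
    intro i hi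
    simp only [mem_range] at hi
    by_cases h0 : i = 0
    · subst h0
      have h2 : zc (2*m) z (2 * 0 + 1 + 1) = zc (2*m) z (2*m) := by
        have he : 2 * 0 + 1 + 1 = 2 * 1 := by norm_num
        rw [he]; exact heven 1 le_rfl (by omega)
      simp only [if_pos rfl, h2]
      norm_num
    · rw [if_neg h0]
      have h1 : zc (2*m) z (2 * i + 1) = 1 := hodd i (by omega) (by omega)
      have h2 : zc (2*m) z (2 * i + 1 + 1) = zc (2*m) z (2*m) := by
        have he : 2 * i + 1 + 1 = 2 * (i + 1) := by ring
        rw [he]; exact heven (i + 1) (by omega) (by omega)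
      simp only [h1, h2, one_mul]
  rw [Finset.prod_congr rfl hpair]
  have hr : range m = range ((m - 1) + 1) := by congr 1; omega
  rw [hr, Finset.prod_range_succ']
  have hc : ∀ i ∈ range (m - 1),
      (if i + 1 = 0 then zc (2*m) z 1 * zc (2*m) z (2*m) else zc (2*m) z (2*m))
        = zc (2*m) z (2*m) := by
    intro i _; simp
  rw [Finset.prod_congr rfl hc, prod_const, if_pos rfl]
  have hp : zc (2*m) z (2*m) ^ m = zc (2*m) z (2*m) ^ (m - 1) * zc (2*m) z (2*m) := by
    rw [← pow_succ]; congr 1; omega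
  rw [hp, Finset.card_range]; ring


noncomputable def DW (n : ℕ) (q : ℂ) (z : Fin n → ℂ) (j : Fin n) : ℂ :=
  (((if j.1 + 1 = 1 then 2 * q * zc n z 1 * zc n z n else 0) +
    (if j.1 + 1 = n then q * zc n z 1 ^ 2 else 0)) * ((∏ k, z k) - 1)
    - q * zc n z 1 ^ 2 * zc n z n * ∏ k ∈ Finset.univ.erase j, z k) / ((∏ k, z k) - 1) ^ 2
  + ((if 2 ≤ j.1 + 1 ∧ j.1 + 1 ≤ n - 1 then zc n z (j.1 + 2) else 0) +
     (if 3 ≤ j.1 + 1 then zc n z j.1 else 0) +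
     (if j.1 + 1 = 2 then 1 else 0))

lemma hasDerivAt_W0 (n : ℕ) (hn : 4 ≤ n) (q : ℂ) (z : Fin n → ℂ)
    (hz : (∏ j, z j) ≠ 1) (j : Fin n) :
    HasDerivAt (fun t => W0 n q (Function.update z j t)) (DW n q z j) (z j) := by
  have hjn := j.2
  have hPj : z j * ∏ k ∈ Finset.univ.erase j, z k = ∏ k, z k :=
    Finset.mul_prod_erase Finset.univ z (Finset.mem_univ j)
  have hD : z j * (∏ k ∈ Finset.univ.erase j, z k) - 1 ≠ 0 := by
    rw [hPj]; exact sub_ne_zero.mpr hz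
  have hif : ∀ i : ℕ, (if (i : ℕ) = j.1 + 1 then z j else zc n z i) = zc n z i := by
    intro i
    split_ifs with h
    · subst h; exact (zc_fin n z j).symm
    · rfl
  have hfun : (fun t => W0 n q (Function.update z j t)) = fun t =>
      q * (if 1 = j.1 + 1 then t else zc n z 1) ^ 2 *
        (if n = j.1 + 1 then t else zc n z n) / (t * ∏ k ∈ Finset.univ.erase j, z k - 1)
      + (if 2 = j.1 + 1 then t else zc n z 2)
      + ∑ i ∈ Finset.Icc 2 (n - 1),
          (if i = j.1 + 1 then t else zc n z i) * (if i + 1 = j.1 + 1 then t else zc n z (i + 1)) := by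
    funext t
    simp only [W0, zc_update]
    rw [Finset.prod_update_of_mem (Finset.mem_univ j), Finset.erase_eq]
  rw [hfun]
  -- denominator
  have hden : HasDerivAt (fun t : ℂ => t * ∏ k ∈ Finset.univ.erase j, z k - 1)
      (∏ k ∈ Finset.univ.erase j, z k) (z j) := by
    simpa using ((hasDerivAt_id (z j)).mul_const (∏ k ∈ Finset.univ.erase j, z k)).sub_const 1
  -- numerator
  have hnum : HasDerivAt (fun t => q * (if 1 = j.1 + 1 then t else zc n z 1) ^ 2 *
      (if n = j.1 + 1 then t else zc n z n))
      ((if j.1 + 1 = 1 then 2 * q * zc n z 1 * zc n z n else 0) +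
       (if j.1 + 1 = n then q * zc n z 1 ^ 2 else 0)) (z j) := by
    by_cases h1 : j.1 + 1 = 1
    · have h2 : ¬(j.1 + 1 = n) := by omega
      have hv : zc n z 1 = z j := by rw [← zc_fin n z j]; congr 1; omega
      have hf : (fun t : ℂ => q * (if 1 = j.1 + 1 then t else zc n z 1) ^ 2 *
          (if n = j.1 + 1 then t else zc n z n)) = fun t => q * t ^ 2 * zc n z n := by
        funext t; rw [if_pos h1.symm, if_neg (fun h => h2 h.symm)]
      rw [hf, if_pos h1, if_neg h2, add_zero]
      have h := ((hasDerivAt_pow 2 (z j)).const_mul q).mul_const (zc n z n)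
      have hval : 2 * q * zc n z 1 * zc n z n = q * ((2:ℕ) * z j ^ (2 - 1)) * zc n z n := by
        rw [hv]; push_cast; ring
      rw [hval]; exact h
    · by_cases h2 : j.1 + 1 = n
      · have hf : (fun t : ℂ => q * (if 1 = j.1 + 1 then t else zc n z 1) ^ 2 *
            (if n = j.1 + 1 then t else zc n z n)) = fun t => q * zc n z 1 ^ 2 * t := by
          funext t; rw [if_neg (fun h => h1 h.symm), if_pos h2.symm]
        rw [hf, if_neg h1, if_pos h2, zero_add]
        simpa using (hasDerivAt_id (z j)).const_mul (q * zc n z 1 ^ 2)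
      · have hf : (fun t : ℂ => q * (if 1 = j.1 + 1 then t else zc n z 1) ^ 2 *
            (if n = j.1 + 1 then t else zc n z n)) = fun _ => q * zc n z 1 ^ 2 * zc n z n := by
          funext t; rw [if_neg (fun h => h1 h.symm), if_neg (fun h => h2 h.symm)]
        rw [hf, if_neg h1, if_neg h2, add_zero]
        exact hasDerivAt_const _ _
  have hfrac := hnum.div hden hD
  -- linear part
  have hlin : HasDerivAt (fun t : ℂ => if 2 = j.1 + 1 then t else zc n z 2)
      (if j.1 + 1 = 2 then 1 else 0) (z j) := by
    by_cases h : j.1 + 1 = 2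
    · have hf : (fun t : ℂ => if 2 = j.1 + 1 then t else zc n z 2) = fun t => t := by
        funext t; rw [if_pos h.symm]
      rw [hf, if_pos h]; exact hasDerivAt_id _
    · have hf : (fun t : ℂ => if 2 = j.1 + 1 then t else zc n z 2) = fun _ => zc n z 2 := by
        funext t; rw [if_neg (fun hh => h hh.symm)]
      rw [hf, if_neg h]; exact hasDerivAt_const _ _
  -- sum part
  have hsum : HasDerivAt (fun t => ∑ i ∈ Finset.Icc 2 (n - 1),
      (if i = j.1 + 1 then t else zc n z i) * (if i + 1 = j.1 + 1 then t else zc n z (i + 1)))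
      (∑ i ∈ Finset.Icc 2 (n - 1),
        (if i = j.1 + 1 then zc n z (i + 1) else if i + 1 = j.1 + 1 then zc n z i else 0)) (z j) := by
    apply HasDerivAt.fun_sum
    intro i _
    by_cases hi1 : i = j.1 + 1
    · have hi2 : ¬(i + 1 = j.1 + 1) := by omega
      have hf : (fun t : ℂ => (if i = j.1 + 1 then t else zc n z i) *
          (if i + 1 = j.1 + 1 then t else zc n z (i + 1))) = fun t => t * zc n z (i + 1) := by
        funext t; rw [if_pos hi1, if_neg hi2]
      rw [hf, if_pos hi1]
      exact hasDerivAt_mul_const _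
    · by_cases hi2 : i + 1 = j.1 + 1
      · have hf : (fun t : ℂ => (if i = j.1 + 1 then t else zc n z i) *
            (if i + 1 = j.1 + 1 then t else zc n z (i + 1))) = fun t => zc n z i * t := by
          funext t; rw [if_neg hi1, if_pos hi2]
        rw [hf, if_neg hi1, if_pos hi2]
        simpa using (hasDerivAt_id (z j)).const_mul (zc n z i)
      · have hf : (fun t : ℂ => (if i = j.1 + 1 then t else zc n z i) *
            (if i + 1 = j.1 + 1 then t else zc n z (i + 1))) = fun _ => zc n z i * zc n z (i + 1) := by
          funext t; rw [if_neg hi1, if_neg hi2]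
        rw [hf, if_neg hi1, if_neg hi2]
        exact hasDerivAt_const _ _
  have hsumval : (∑ i ∈ Finset.Icc 2 (n - 1),
      (if i = j.1 + 1 then zc n z (i + 1) else if i + 1 = j.1 + 1 then zc n z i else 0))
      = (if 2 ≤ j.1 + 1 ∧ j.1 + 1 ≤ n - 1 then zc n z (j.1 + 2) else 0) +
        (if 3 ≤ j.1 + 1 then zc n z j.1 else 0) := by
    have hsplit : ∀ i ∈ Finset.Icc 2 (n - 1),
        (if i = j.1 + 1 then zc n z (i + 1) else if i + 1 = j.1 + 1 then zc n z i else 0)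
        = (if i = j.1 + 1 then zc n z (j.1 + 2) else 0) + (if i = j.1 then zc n z j.1 else 0) := by
      intro i _
      by_cases hi1 : i = j.1 + 1
      · have hi2 : ¬(i = j.1) := by omega
        rw [if_pos hi1, if_pos hi1, if_neg hi2, add_zero, hi1]
      · by_cases hi2 : i + 1 = j.1 + 1
        · have hi3 : i = j.1 := by omega
          rw [if_neg hi1, if_pos hi2, if_neg hi1, if_pos hi3, zero_add, hi3]
        · have hi3 : ¬(i = j.1) := by omega
          rw [if_neg hi1, if_neg hi2, if_neg hi1, if_neg hi3, add_zero]
    rw [Finset.sum_congr rfl hsplit, Finset.sum_add_distrib,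
      Finset.sum_ite_eq' (Finset.Icc 2 (n - 1)) (j.1 + 1) (fun _ => zc n z (j.1 + 2)),
      Finset.sum_ite_eq' (Finset.Icc 2 (n - 1)) j.1 (fun _ => zc n z j.1)]
    congr 1
    · by_cases hc : 2 ≤ j.1 + 1 ∧ j.1 + 1 ≤ n - 1
      · rw [if_pos (Finset.mem_Icc.mpr hc), if_pos hc]
      · rw [if_neg (fun h => hc (Finset.mem_Icc.mp h)), if_neg hc]
    · by_cases hc : 3 ≤ j.1 + 1
      · rw [if_pos (Finset.mem_Icc.mpr ⟨by omega, by omega⟩), if_pos hc]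
      · rw [if_neg (fun h => hc (by have := (Finset.mem_Icc.mp h).1; omega)), if_neg hc]
  have H := (hfrac.add hlin).add hsum
  have hE : DW n q z j = (((if j.1 + 1 = 1 then 2 * q * zc n z 1 * zc n z n else 0) +
        (if j.1 + 1 = n then q * zc n z 1 ^ 2 else 0)) *
          (z j * ∏ k ∈ Finset.univ.erase j, z k - 1) -
        q * (if 1 = j.1 + 1 then z j else zc n z 1) ^ 2 *
          (if n = j.1 + 1 then z j else zc n z n) * ∏ k ∈ Finset.univ.erase j, z k) /
        (z j * ∏ k ∈ Finset.univ.erase j, z k - 1) ^ 2 +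
      (if j.1 + 1 = 2 then 1 else 0) +
      (∑ i ∈ Finset.Icc 2 (n - 1),
        (if i = j.1 + 1 then zc n z (i + 1) else if i + 1 = j.1 + 1 then zc n z i else 0)) := by
    rw [hsumval]
    simp only [DW]
    rw [hif 1, hif n, hPj]
    ring
  rw [hE]
  exact H

lemma div_aux {X L D2 : ℂ} (hD2 : D2 ≠ 0) (h : X / D2 + L = 0) : X + L * D2 = 0 := by
  field_simp at h
  linear_combination h

noncomputable def Ek (n : ℕ) (q : ℂ) (z : Fin n → ℂ) (k : ℕ) : ℂ :=
  (((if k = 1 then 2 * q * zc n z 1 * zc n z n else 0) +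
    (if k = n then q * zc n z 1 ^ 2 else 0)) * ((∏ j, z j) - 1)
    - q * zc n z 1 ^ 2 * zc n z n *
      (if h : 1 ≤ k ∧ k ≤ n then
        ∏ l ∈ Finset.univ.erase (⟨k - 1, by omega⟩ : Fin n), z l else 0))
    / ((∏ j, z j) - 1) ^ 2
  + ((if 2 ≤ k ∧ k ≤ n - 1 then zc n z (k + 1) else 0) +
     (if 3 ≤ k then zc n z (k - 1) else 0) +
     (if k = 2 then 1 else 0))

lemma DW_eq_Ek (n : ℕ) (q : ℂ) (z : Fin n → ℂ) (j : Fin n) :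
    DW n q z j = Ek n q z (j.1 + 1) := by
  have hjn := j.2
  simp only [DW, Ek]
  rw [dif_pos ⟨by omega, by omega⟩]
  have h1 : (⟨j.1 + 1 - 1, by omega⟩ : Fin n) = j := Fin.ext (by simp)
  rw [h1, show j.1 + 1 + 1 = j.1 + 2 by omega, show j.1 + 1 - 1 = j.1 by omega]

lemma crit_iff (n : ℕ) (hn : 4 ≤ n) (q : ℂ) (z : Fin n → ℂ) (hz : (∏ j, z j) ≠ 1) :
    (∀ j : Fin n, deriv (fun t => W0 n q (Function.update z j t)) (z j) = 0) ↔
    (∀ k : ℕ, 1 ≤ k → k ≤ n → Ek n q z k = 0) := by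
  constructor
  · intro h k h1 h2
    have e := h ⟨k - 1, by omega⟩
    rw [(hasDerivAt_W0 n hn q z hz ⟨k - 1, by omega⟩).deriv] at e
    rw [DW_eq_Ek] at e
    simpa [show k - 1 + 1 = k by omega] using e
  · intro h j
    rw [(hasDerivAt_W0 n hn q z hz j).deriv, DW_eq_Ek]
    exact h (j.1 + 1) (by omega) (by omega)

lemma Ek_mul (n : ℕ) (hn : 4 ≤ n) (q : ℂ) (z : Fin n → ℂ) (hz : (∏ j, z j) ≠ 1)
    (k : ℕ) (h1 : 1 ≤ k) (h2 : k ≤ n) (he : Ek n q z k = 0) :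
    zc n z k * (((if k = 1 then 2 * q * zc n z 1 * zc n z n else 0) +
      (if k = n then q * zc n z 1 ^ 2 else 0)) * ((∏ j, z j) - 1))
    - q * zc n z 1 ^ 2 * zc n z n * (∏ j, z j)
    + zc n z k * ((if 2 ≤ k ∧ k ≤ n - 1 then zc n z (k + 1) else 0) +
       (if 3 ≤ k then zc n z (k - 1) else 0) +
       (if k = 2 then 1 else 0)) * ((∏ j, z j) - 1) ^ 2 = 0 := by
  have hD : (∏ j, z j) - 1 ≠ 0 := sub_ne_zero.mpr hz
  have hD2 : ((∏ j, z j) - 1) ^ 2 ≠ 0 := pow_ne_zero _ hD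
  rw [Ek, dif_pos ⟨h1, h2⟩] at he
  have e2 := div_aux hD2 he
  have hzp : zc n z k * ∏ l ∈ Finset.univ.erase (⟨k - 1, by omega⟩ : Fin n), z l
      = ∏ j, z j := by
    rw [zc_eq n z k h1 h2]
    exact Finset.mul_prod_erase _ _ (Finset.mem_univ _)
  linear_combination zc n z k * e2 + (q * zc n z 1 ^ 2 * zc n z n) * hzp

lemma Ek_of_mul (n : ℕ) (hn : 4 ≤ n) (q : ℂ) (z : Fin n → ℂ) (hz : (∏ j, z j) ≠ 1)
    (k : ℕ) (h1 : 1 ≤ k) (h2 : k ≤ n) (hzk : zc n z k ≠ 0)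
    (hkey : zc n z k * (((if k = 1 then 2 * q * zc n z 1 * zc n z n else 0) +
      (if k = n then q * zc n z 1 ^ 2 else 0)) * ((∏ j, z j) - 1))
    - q * zc n z 1 ^ 2 * zc n z n * (∏ j, z j)
    + zc n z k * ((if 2 ≤ k ∧ k ≤ n - 1 then zc n z (k + 1) else 0) +
       (if 3 ≤ k then zc n z (k - 1) else 0) +
       (if k = 2 then 1 else 0)) * ((∏ j, z j) - 1) ^ 2 = 0) :
    Ek n q z k = 0 := by
  have hD : (∏ j, z j) - 1 ≠ 0 := sub_ne_zero.mpr hz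
  have hD2 : ((∏ j, z j) - 1) ^ 2 ≠ 0 := pow_ne_zero _ hD
  rw [Ek, dif_pos ⟨h1, h2⟩]
  have hzp : zc n z k * ∏ l ∈ Finset.univ.erase (⟨k - 1, by omega⟩ : Fin n), z l
      = ∏ j, z j := by
    rw [zc_eq n z k h1 h2]
    exact Finset.mul_prod_erase _ _ (Finset.mem_univ _)
  have hkey2 : zc n z k * ((((if k = 1 then 2 * q * zc n z 1 * zc n z n else 0) +
      (if k = n then q * zc n z 1 ^ 2 else 0)) * ((∏ j, z j) - 1)
      - q * zc n z 1 ^ 2 * zc n z n *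
        ∏ l ∈ Finset.univ.erase (⟨k - 1, by omega⟩ : Fin n), z l)
      + ((if 2 ≤ k ∧ k ≤ n - 1 then zc n z (k + 1) else 0) +
       (if 3 ≤ k then zc n z (k - 1) else 0) +
       (if k = 2 then 1 else 0)) * ((∏ j, z j) - 1) ^ 2) = 0 := by
    linear_combination hkey - (q * zc n z 1 ^ 2 * zc n z n) * hzp
  have hkey3 := (mul_eq_zero.mp hkey2).resolve_left hzk
  rw [div_add' _ _ _ hD2, div_eq_zero_iff]
  left
  exact hkey3

lemma forward (n m : ℕ) (hn : 4 ≤ n) (hm : n = 2 * m) (q : ℂ) (hq : q ≠ 0)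
    (z : Fin n → ℂ) (hz : (∏ j, z j) ≠ 1)
    (hE : ∀ k : ℕ, 1 ≤ k → k ≤ n → Ek n q z k = 0) :
    MemV1 n q z ∨ MemV2 n q z := by
  have hm2 : 2 ≤ m := by omega
  have hD : (∏ j, z j) - 1 ≠ 0 := sub_ne_zero.mpr hz
  have hD2 : ((∏ j, z j) - 1) ^ 2 ≠ 0 := pow_ne_zero _ hD
  have hMul : ∀ k, 1 ≤ k → k ≤ n →
      zc n z k * (((if k = 1 then 2 * q * zc n z 1 * zc n z n else 0) +
        (if k = n then q * zc n z 1 ^ 2 else 0)) * ((∏ j, z j) - 1))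
      - q * zc n z 1 ^ 2 * zc n z n * (∏ j, z j)
      + zc n z k * ((if 2 ≤ k ∧ k ≤ n - 1 then zc n z (k + 1) else 0) +
         (if 3 ≤ k then zc n z (k - 1) else 0) +
         (if k = 2 then 1 else 0)) * ((∏ j, z j) - 1) ^ 2 = 0 :=
    fun k h1 h2 => Ek_mul n hn q z hz k h1 h2 (hE k h1 h2)
  have hA2 : q * zc n z 1 ^ 2 * zc n z n * ((∏ j, z j) - 2) = 0 := by
    have e := hMul 1 (by omega) (by omega)
    rw [if_pos rfl, if_neg (show ¬(1 = n) by omega),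
      if_neg (show ¬(2 ≤ 1 ∧ 1 ≤ n - 1) by omega),
      if_neg (show ¬(3 ≤ 1) by omega), if_neg (show ¬(1 = 2) by omega)] at e
    linear_combination e
  by_cases hA0 : q * zc n z 1 ^ 2 * zc n z n = 0
  · -- case A = 0 : V2
    right
    have hRaw : ∀ k, 1 ≤ k → k ≤ n →
        (((if k = 1 then 2 * q * zc n z 1 * zc n z n else 0) +
          (if k = n then q * zc n z 1 ^ 2 else 0)) * ((∏ j, z j) - 1))
        + ((if 2 ≤ k ∧ k ≤ n - 1 then zc n z (k + 1) else 0) +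
           (if 3 ≤ k then zc n z (k - 1) else 0) +
           (if k = 2 then 1 else 0)) * ((∏ j, z j) - 1) ^ 2 = 0 := by
      intro k h1 h2
      have e := hE k h1 h2
      rw [Ek, dif_pos ⟨h1, h2⟩] at e
      have e2 := div_aux hD2 e
      linear_combination e2 +
        (∏ l ∈ Finset.univ.erase (⟨k - 1, by omega⟩ : Fin n), z l) * hA0
    have hL : ∀ k, 2 ≤ k → k ≤ n - 1 →
        zc n z (k + 1) + (if 3 ≤ k then zc n z (k - 1) else 0) +
          (if k = 2 then 1 else 0) = 0 := by
      intro k h1 h2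
      have e := hRaw k (by omega) (by omega)
      rw [if_neg (show ¬(k = 1) by omega), if_neg (show ¬(k = n) by omega),
        if_pos ⟨h1, h2⟩] at e
      have e3 : (zc n z (k + 1) + (if 3 ≤ k then zc n z (k - 1) else 0) +
          (if k = 2 then 1 else 0)) * ((∏ j, z j) - 1) ^ 2 = 0 := by
        linear_combination e
      exact (mul_eq_zero.mp e3).resolve_right hD2
    have hstep : ∀ k, 3 ≤ k → k ≤ n - 1 → zc n z (k + 1) + zc n z (k - 1) = 0 := by
      intro k h1 h2
      have e := hL k (by omega) h2
      rw [if_pos h1, if_neg (show ¬(k = 2) by omega)] at e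
      linear_combination e
    have h3 : zc n z 3 = -1 := by
      have e := hL 2 (by omega) (by omega)
      rw [if_neg (show ¬(3 ≤ 2) by omega), if_pos rfl] at e
      linear_combination e
    have hoddval : ∀ i, i ≤ m - 1 → 1 ≤ i → zc n z (2 * i + 1) = (-1 : ℂ) ^ i := by
      intro i
      induction i with
      | zero => intro _ h; omega
      | succ i ih =>
        intro hle h1
        by_cases hi : i = 0
        · subst hi; norm_num [h3]
        · have hprev := ih (by omega) (by omega)
          have e := hstep (2 * i + 2) (by omega) (by omega)
          rw [show 2 * i + 2 - 1 = 2 * i + 1 by omega] at e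
          rw [show 2 * (i + 1) + 1 = 2 * i + 2 + 1 by ring, pow_succ]
          linear_combination e - hprev
    have hevenrel : ∀ i, i ≤ m - 1 → zc n z (2 * (i + 1)) = (-1 : ℂ) ^ i * zc n z 2 := by
      intro i
      induction i with
      | zero => intro _; norm_num
      | succ i ih =>
        intro hle
        have hprev := ih (by omega)
        have e := hstep (2 * i + 3) (by omega) (by omega)
        rw [show 2 * i + 3 - 1 = 2 * (i + 1) by omega,
          show 2 * i + 3 + 1 = 2 * (i + 1 + 1) by omega] at e
        rw [pow_succ]
        linear_combination e - hprev
    have hen : (q * zc n z 1 ^ 2) * ((∏ j, z j) - 1) +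
        zc n z (n - 1) * ((∏ j, z j) - 1) ^ 2 = 0 := by
      have e := hRaw n (by omega) (by omega)
      rw [if_neg (show ¬(n = 1) by omega), if_pos rfl,
        if_neg (show ¬(2 ≤ n ∧ n ≤ n - 1) by omega),
        if_pos (show 3 ≤ n by omega), if_neg (show ¬(n = 2) by omega)] at e
      linear_combination e
    have hnm1 : zc n z (n - 1) = (-1 : ℂ) ^ (m - 1) := by
      have hh := hoddval (m - 1) (le_refl _) (by omega)
      rw [show 2 * (m - 1) + 1 = n - 1 by omega] at hh
      exact hh
    have hz1ne : zc n z 1 ≠ 0 := by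
      intro h0
      rw [h0] at hen
      have e3 : zc n z (n - 1) * ((∏ j, z j) - 1) ^ 2 = 0 := by linear_combination hen
      have hzz := (mul_eq_zero.mp e3).resolve_right hD2
      rw [hnm1] at hzz
      exact pow_ne_zero (m - 1) (by norm_num : (-1 : ℂ) ≠ 0) hzz
    have hznz : zc n z n = 0 := by
      rcases mul_eq_zero.mp hA0 with h | h
      · rcases mul_eq_zero.mp h with h' | h'
        · exact absurd h' hq
        · exact absurd h' (pow_ne_zero 2 hz1ne)
      · exact h
    have hz2 : zc n z 2 = 0 := by
      have hh := hevenrel (m - 1) (le_refl _)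
      rw [show 2 * (m - 1 + 1) = n by omega, hznz] at hh
      have hne : ((-1 : ℂ)) ^ (m - 1) ≠ 0 := pow_ne_zero _ (by norm_num)
      exact (mul_eq_zero.mp hh.symm).resolve_left hne
    have heven0 : ∀ i, 1 ≤ i → i ≤ m → zc n z (2 * i) = 0 := by
      intro i h1 h2
      have hh := hevenrel (i - 1) (by omega)
      rw [show i - 1 + 1 = i by omega] at hh
      rw [hh, hz2, mul_zero]
    have hP0 : (∏ j, z j) = 0 := by
      apply Finset.prod_eq_zero (Finset.mem_univ (⟨n - 1, by omega⟩ : Fin n))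
      rw [← zc_eq n z n (by omega) (by omega)]
      exact hznz
    have hq2 : q * zc n z 1 ^ 2 = (-1 : ℂ) ^ ((n - 2) / 2) := by
      rw [hP0, hnm1] at hen
      rw [show (n - 2) / 2 = m - 1 by omega]
      linear_combination -hen
    refine ⟨?_, ?_, hq2⟩
    · intro i h1 h2
      rw [show n / 2 - 1 = m - 1 by omega] at h2
      exact hoddval i h2 h1
    · intro i h1 h2
      rw [show n / 2 = m by omega] at h2
      exact heven0 i h1 h2
  · -- case A ≠ 0 : V1
    left
    have hP2 : (∏ j, z j) = 2 := by
      have hh := (mul_eq_zero.mp hA2).resolve_left hA0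
      linear_combination hh
    have hPne : (∏ j, z j) ≠ 0 := by rw [hP2]; norm_num
    have hallne : ∀ j : Fin n, z j ≠ 0 :=
      fun j => Finset.prod_ne_zero_iff.mp hPne j (Finset.mem_univ j)
    have hzc0 : ∀ k, 1 ≤ k → k ≤ n → zc n z k ≠ 0 := zc_ne_zero n z hallne
    have ht2 : zc n z 2 * (zc n z 3 + 1) = 2 * (q * zc n z 1 ^ 2 * zc n z n) := by
      have e := hMul 2 (by omega) (by omega)
      rw [if_neg (show ¬(2 = 1) by omega), if_neg (show ¬(2 = n) by omega),
        if_pos (show 2 ≤ 2 ∧ 2 ≤ n - 1 by omega), if_neg (show ¬(3 ≤ 2) by omega),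
        if_pos rfl, hP2] at e
      linear_combination e
    have ht : ∀ k, 3 ≤ k → k ≤ n - 1 →
        zc n z k * (zc n z (k + 1) + zc n z (k - 1)) =
          2 * (q * zc n z 1 ^ 2 * zc n z n) := by
      intro k h1 h2
      have e := hMul k (by omega) (by omega)
      rw [if_neg (show ¬(k = 1) by omega), if_neg (show ¬(k = n) by omega),
        if_pos (show 2 ≤ k ∧ k ≤ n - 1 by omega), if_pos h1,
        if_neg (show ¬(k = 2) by omega), hP2] at e
      linear_combination e
    have htn : zc n z (n - 1) * zc n z n = q * zc n z 1 ^ 2 * zc n z n := by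
      have e := hMul n (by omega) (by omega)
      rw [if_neg (show ¬(n = 1) by omega), if_pos rfl,
        if_neg (show ¬(2 ≤ n ∧ n ≤ n - 1) by omega), if_pos (show 3 ≤ n by omega),
        if_neg (show ¬(n = 2) by omega), hP2] at e
      linear_combination e
    have htv : ∀ k, 2 ≤ k → k ≤ n - 1 → zc n z k * zc n z (k + 1) =
        if Even k then 2 * (q * zc n z 1 ^ 2 * zc n z n) - zc n z 2 else zc n z 2 := by
      intro k
      induction k with
      | zero => intro h; omega
      | succ k ih =>
        intro h2 h3
        by_cases hk : k + 1 = 2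
        · have hkk : k = 1 := by omega
          subst hkk
          rw [if_pos (show Even (1 + 1) by decide)]
          norm_num
          linear_combination ht2
        · have hk3 : 3 ≤ k + 1 := by omega
          have hprev := ih (by omega) (by omega)
          have e := ht (k + 1) hk3 h3
          rw [show k + 1 - 1 = k by omega] at e
          rcases Nat.even_or_odd (k + 1) with he | ho
          · rw [if_pos he]
            have ho' : ¬ Even k := by
              rcases he with ⟨r, hr⟩; rintro ⟨s, hs⟩; omega
            rw [if_neg ho'] at hprev
            linear_combination e - hprev
          · have hne : ¬ Even (k + 1) := by
              rcases ho with ⟨r, hr⟩; rintro ⟨s, hs⟩; omega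
            rw [if_neg hne]
            have he' : Even k := by
              rcases ho with ⟨r, hr⟩; exact ⟨r, by omega⟩
            rw [if_pos he'] at hprev
            linear_combination e - hprev
    have hodd' : ¬ Even (n - 1) := by rintro ⟨r, hr⟩; omega
    have hz2A : zc n z 2 = q * zc n z 1 ^ 2 * zc n z n := by
      have h1 := htv (n - 1) (by omega) (le_refl _)
      rw [if_neg hodd', show n - 1 + 1 = n by omega] at h1
      linear_combination htn - h1
    have htA : ∀ k, 2 ≤ k → k ≤ n - 1 →
        zc n z k * zc n z (k + 1) = q * zc n z 1 ^ 2 * zc n z n := by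
      intro k h1 h2
      have e := htv k h1 h2
      split_ifs at e with hpar
      · linear_combination e - hz2A
      · linear_combination e + hz2A
    have hperiod : ∀ k, 2 ≤ k → k ≤ n - 2 → zc n z (k + 2) = zc n z k := by
      intro k h1 h2
      have e1 := htA k h1 (by omega)
      have e2 := htA (k + 1) (by omega) (by omega)
      rw [show k + 1 + 1 = k + 2 by omega] at e2
      have hne := hzc0 (k + 1) (by omega) (by omega)
      have hcan : zc n z (k + 1) * zc n z (k + 2) = zc n z (k + 1) * zc n z k := by
        linear_combination e2 - e1
      exact mul_left_cancel₀ hne hcan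
    have hz3 : zc n z 3 = 1 := by
      have e : zc n z 2 * (zc n z 3 + 1) = zc n z 2 * 2 := by
        linear_combination ht2 - 2 * hz2A
      have h2ne := hzc0 2 (by omega) (by omega)
      have hcc := mul_left_cancel₀ h2ne e
      linear_combination hcc
    have hoddv : ∀ i, 1 ≤ i → i ≤ m - 1 → zc n z (2 * i + 1) = 1 := by
      intro i
      induction i with
      | zero => intro h; omega
      | succ i ih =>
        intro h1 h2
        by_cases hi : i = 0
        · subst hi; norm_num [hz3]
        · have hprev := ih (by omega) (by omega)
          have e := hperiod (2 * i + 1) (by omega) (by omega)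
          rw [show 2 * i + 1 + 2 = 2 * (i + 1) + 1 by ring] at e
          rw [e]; exact hprev
    have hevc : ∀ i, i ≤ m - 1 → zc n z (2 * (i + 1)) = zc n z 2 := by
      intro i
      induction i with
      | zero => intro _; norm_num
      | succ i ih =>
        intro h2
        have hprev := ih (by omega)
        have e := hperiod (2 * (i + 1)) (by omega) (by omega)
        rw [show 2 * (i + 1) + 2 = 2 * (i + 1 + 1) by ring] at e
        rw [e]; exact hprev
    have hz2n : zc n z 2 = zc n z n := by
      have hh := hevc (m - 1) (le_refl _)
      rw [show 2 * (m - 1 + 1) = n by omega] at hh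
      exact hh.symm
    have hevenv : ∀ i, 1 ≤ i → i ≤ m → zc n z (2 * i) = zc n z n := by
      intro i h1 h2
      have hh := hevc (i - 1) (by omega)
      rw [show i - 1 + 1 = i by omega] at hh
      rw [hh, hz2n]
    have hznne := hzc0 n (by omega) (by omega)
    have hq1 : q * zc n z 1 ^ 2 = 1 := by
      have hh : q * zc n z 1 ^ 2 * zc n z n = 1 * zc n z n := by
        linear_combination hz2n - hz2A
      exact mul_right_cancel₀ hznne hh
    have hprodv := prod_eq_V1 n m hn hm z hoddv hevenv
    have hfinal : zc n z 1 * zc n z n ^ m = 2 := by rw [← hprodv, hP2]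
    refine ⟨?_, ?_, hq1, ?_⟩
    · intro i h1 h2
      rw [show n / 2 - 1 = m - 1 by omega] at h2
      exact hoddv i h1 h2
    · intro i h1 h2
      rw [show n / 2 = m by omega] at h2
      exact hevenv i h1 h2
    · rw [show n / 2 = m by omega]
      exact hfinal

lemma backward1 (n m : ℕ) (hn : 4 ≤ n) (hm : n = 2 * m) (q : ℂ)
    (z : Fin n → ℂ) (hz : (∏ j, z j) ≠ 1) (h : MemV1 n q z) :
    ∀ k, 1 ≤ k → k ≤ n → Ek n q z k = 0 := by
  obtain ⟨hodd, heven, hq1, hzn⟩ := h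
  have hm2 : 2 ≤ m := by omega
  rw [show n / 2 = m by omega] at heven hzn
  rw [show n / 2 - 1 = m - 1 by omega] at hodd
  have hP2 : (∏ j, z j) = 2 := by
    rw [prod_eq_V1 n m hn hm z hodd heven, hzn]
  have hz1ne : zc n z 1 ≠ 0 := by
    intro h0; rw [h0] at hzn; norm_num at hzn
  have hznne : zc n z n ≠ 0 := by
    intro h0
    rw [h0, zero_pow (show m ≠ 0 by omega), mul_zero] at hzn
    norm_num at hzn
  have hzck : ∀ k, 1 ≤ k → k ≤ n → zc n z k ≠ 0 := by
    intro k h1 h2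
    rcases Nat.even_or_odd k with ⟨i, hi⟩ | ⟨i, hi⟩
    · have hh : zc n z k = zc n z n := by
        rw [show k = 2 * i by omega]; exact heven i (by omega) (by omega)
      rw [hh]; exact hznne
    · by_cases hi0 : i = 0
      · rw [show k = 1 by omega]; exact hz1ne
      · have hh : zc n z k = 1 := by
          rw [show k = 2 * i + 1 by omega]; exact hodd i (by omega) (by omega)
        rw [hh]; norm_num
  intro k h1 h2
  apply Ek_of_mul n hn q z hz k h1 h2 (hzck k h1 h2)
  rw [hP2]
  by_cases hk1 : k = 1
  · subst hk1
    rw [if_pos rfl, if_neg (show ¬(1 = n) by omega),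
      if_neg (show ¬(2 ≤ 1 ∧ 1 ≤ n - 1) by omega),
      if_neg (show ¬(3 ≤ 1) by omega), if_neg (show ¬(1 = 2) by omega)]
    ring
  · by_cases hk2 : k = 2
    · subst hk2
      rw [if_neg (show ¬(2 = 1) by omega), if_neg (show ¬(2 = n) by omega),
        if_pos (show 2 ≤ 2 ∧ 2 ≤ n - 1 by omega), if_neg (show ¬(3 ≤ 2) by omega),
        if_pos rfl]
      have h3 : zc n z 3 = 1 := by
        rw [show (3 : ℕ) = 2 * 1 + 1 by norm_num]; exact hodd 1 le_rfl (by omega)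
      have h2v : zc n z 2 = zc n z n := by
        rw [show (2 : ℕ) = 2 * 1 by norm_num]; exact heven 1 le_rfl (by omega)
      rw [show (2 : ℕ) + 1 = 3 by norm_num, h3, h2v]
      linear_combination (-2 * zc n z n) * hq1
    · by_cases hkn : k = n
      · have hkv : zc n z k = zc n z n := by rw [hkn]
        rw [if_neg (show ¬(k = 1) by omega), if_pos hkn,
          if_neg (show ¬(2 ≤ k ∧ k ≤ n - 1) by omega), if_pos (show 3 ≤ k by omega),
          if_neg (show ¬(k = 2) by omega), hkv]
        have hv : zc n z (k - 1) = 1 := by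
          rw [show k - 1 = 2 * (m - 1) + 1 by omega]
          exact hodd (m - 1) (by omega) (by omega)
        rw [hv]
        linear_combination (-(zc n z n)) * hq1
      · have h3k : 3 ≤ k := by omega
        have hkn1 : k ≤ n - 1 := by omega
        rw [if_neg hk1, if_neg hkn, if_pos ⟨by omega, hkn1⟩, if_pos h3k, if_neg hk2]
        rcases Nat.even_or_odd k with ⟨i, hi⟩ | ⟨i, hi⟩
        · have hkv : zc n z k = zc n z n := by
            rw [show k = 2 * i by omega]; exact heven i (by omega) (by omega)
          have hk1v : zc n z (k + 1) = 1 := by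
            rw [show k + 1 = 2 * i + 1 by omega]; exact hodd i (by omega) (by omega)
          have hk2v : zc n z (k - 1) = 1 := by
            rw [show k - 1 = 2 * (i - 1) + 1 by omega]
            exact hodd (i - 1) (by omega) (by omega)
          rw [hkv, hk1v, hk2v]
          linear_combination (-2 * zc n z n) * hq1
        · have hkv : zc n z k = 1 := by
            rw [show k = 2 * i + 1 by omega]; exact hodd i (by omega) (by omega)
          have hk1v : zc n z (k + 1) = zc n z n := by
            rw [show k + 1 = 2 * (i + 1) by omega]
            exact heven (i + 1) (by omega) (by omega)
          have hk2v : zc n z (k - 1) = zc n z n := by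
            rw [show k - 1 = 2 * i by omega]; exact heven i (by omega) (by omega)
          rw [hkv, hk1v, hk2v]
          linear_combination (-2 * zc n z n) * hq1

lemma backward2 (n m : ℕ) (hn : 4 ≤ n) (hm : n = 2 * m) (q : ℂ)
    (z : Fin n → ℂ) (hz : (∏ j, z j) ≠ 1) (h : MemV2 n q z) :
    ∀ k, 1 ≤ k → k ≤ n → Ek n q z k = 0 := by
  obtain ⟨hodd, heven, hq2⟩ := h
  have hm2 : 2 ≤ m := by omega
  rw [show n / 2 = m by omega] at heven
  rw [show n / 2 - 1 = m - 1 by omega] at hodd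
  rw [show (n - 2) / 2 = m - 1 by omega] at hq2
  have hzn0 : zc n z n = 0 := by
    have hh := heven m (by omega) le_rfl
    rw [show 2 * m = n by omega] at hh
    exact hh
  have hP0 : (∏ j, z j) = 0 := by
    apply Finset.prod_eq_zero (Finset.mem_univ (⟨n - 1, by omega⟩ : Fin n))
    rw [← zc_eq n z n (by omega) (by omega)]
    exact hzn0
  intro k h1 h2
  rw [Ek, dif_pos ⟨h1, h2⟩, hzn0, hP0]
  by_cases hk1 : k = 1
  · subst hk1
    rw [if_pos rfl, if_neg (show ¬(1 = n) by omega),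
      if_neg (show ¬(2 ≤ 1 ∧ 1 ≤ n - 1) by omega),
      if_neg (show ¬(3 ≤ 1) by omega), if_neg (show ¬(1 = 2) by omega)]
    ring
  · by_cases hk2 : k = 2
    · subst hk2
      rw [if_neg (show ¬(2 = 1) by omega), if_neg (show ¬(2 = n) by omega),
        if_pos (show 2 ≤ 2 ∧ 2 ≤ n - 1 by omega), if_neg (show ¬(3 ≤ 2) by omega),
        if_pos rfl]
      have h3 : zc n z (2 + 1) = -1 := by
        rw [show (2 : ℕ) + 1 = 2 * 1 + 1 by norm_num]
        rw [hodd 1 le_rfl (by omega)]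
        norm_num
      rw [h3]
      ring
    · by_cases hkn : k = n
      · rw [if_neg (show ¬(k = 1) by omega), if_pos hkn,
          if_neg (show ¬(2 ≤ k ∧ k ≤ n - 1) by omega), if_pos (show 3 ≤ k by omega),
          if_neg (show ¬(k = 2) by omega)]
        have hv : zc n z (k - 1) = (-1 : ℂ) ^ (m - 1) := by
          rw [show k - 1 = 2 * (m - 1) + 1 by omega]
          exact hodd (m - 1) (by omega) (by omega)
        rw [hv, hq2]
        ring
      · have h3k : 3 ≤ k := by omega
        rw [if_neg hk1, if_neg hkn, if_pos ⟨by omega, by omega⟩, if_pos h3k, if_neg hk2]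
        rcases Nat.even_or_odd k with ⟨i, hi⟩ | ⟨i, hi⟩
        · have hk1v : zc n z (k + 1) = (-1 : ℂ) ^ i := by
            rw [show k + 1 = 2 * i + 1 by omega]; exact hodd i (by omega) (by omega)
          have hk2v : zc n z (k - 1) = (-1 : ℂ) ^ (i - 1) := by
            rw [show k - 1 = 2 * (i - 1) + 1 by omega]
            exact hodd (i - 1) (by omega) (by omega)
          rw [hk1v, hk2v]
          have hpw : (-1 : ℂ) ^ i = (-1 : ℂ) ^ (i - 1) * (-1) := by
            rw [← pow_succ]; congr 1; omega
          rw [hpw]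
          ring
        · have hk1v : zc n z (k + 1) = 0 := by
            rw [show k + 1 = 2 * (i + 1) by omega]
            exact heven (i + 1) (by omega) (by omega)
          have hk2v : zc n z (k - 1) = 0 := by
            rw [show k - 1 = 2 * i by omega]; exact heven i (by omega) (by omega)
          rw [hk1v, hk2v]
          ring


/-- **Critical locus of the mirror LG potential of the quadric** (Proposition, §3).
For even `n ≥ 4` and `q ≠ 0`: a point `z ∈ Zⁿ` is a critical point of `W₀` if and only if
`z ∈ V(I₁)` or `z ∈ V(I₂)`; moreover `V(I₁) ∩ V(I₂) = ∅`. -/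
theorem quadric_mirror_critical_locus (n : ℕ) (hn : 4 ≤ n) (hev : Even n)
    (q : ℂ) (hq : q ≠ 0) :
    (∀ z : Fin n → ℂ, (∏ j, z j) ≠ 1 →
      ((∀ j : Fin n, deriv (fun t => W0 n q (Function.update z j t)) (z j) = 0) ↔
        (MemV1 n q z ∨ MemV2 n q z))) ∧
    (∀ z : Fin n → ℂ, (∏ j, z j) ≠ 1 → ¬(MemV1 n q z ∧ MemV2 n q z)) := by
  obtain ⟨m, hm0⟩ := hev
  have hm : n = 2 * m := by omega
  constructor
  · intro z hz
    rw [crit_iff n hn q z hz]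
    constructor
    · intro h
      exact forward n m hn hm q hq z hz h
    · rintro (h | h)
      · exact backward1 n m hn hm q z hz h
      · exact backward2 n m hn hm q z hz h
  · rintro z hz ⟨h1, h2⟩
    have hzn0 : zc n z n = 0 := by
      have hh := h2.2.1 (n / 2) (by omega) le_rfl
      rw [show 2 * (n / 2) = n by omega] at hh
      exact hh
    have hh := h1.2.2.2
    rw [hzn0, zero_pow (show n / 2 ≠ 0 by omega), mul_zero] at hh
    norm_num at hh
end
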